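/- Let p be prime and a = (a_n)_{n≥0} a non-ultimately-periodic sequence over P = {0,...,p−1} with ξ = Σ a_n p^n ∈ ℚ_p. Assume there exist n_0 ≥ 1 and κ ≥ 2 with p(a,n) ≤ κn for all n ≥ n_0, and that Dio(a) is finite. Then w_1(ξ) ≤ 8(κ+1)^2(2κ+1)·Dio(a) − 1; in particular ξ is not a U_1-number. -/

import Mathlib

/-- The length of the fractional power `V^w` of a word of length `s`. -/
def powLen (s : ℕ) (w : ℚ) : ℕ := ⌊w⌋.toNat * s + ⌈(w - ⌊w⌋) * s⌉.toNat

/-- `U V^w` is a prefix of the infinite word `a`. -/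
def IsPrefixPow {A : Type*} (a : ℕ → A) (U V : List A) (w : ℚ) : Prop :=
  (∀ i < U.length, a i = U.getD i (a 0)) ∧
  ∀ i, U.length ≤ i → i < U.length + powLen V.length w →
    a i = V.getD ((i - U.length) % V.length) (a 0)

/-- The sequence `a` is ultimately periodic. -/
def UltimatelyPeriodic {A : Type*} (a : ℕ → A) : Prop :=
  ∃ r s : ℕ, 0 < s ∧ ∀ n, r ≤ n → a (n + s) = a n

/-- Condition `(*)_ρ`. -/
def DioCond {A : Type*} (a : ℕ → A) (ρ : ℝ) : Prop :=
  ∃ (U V : ℕ → List A) (w : ℕ → ℚ),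
    (∀ n, V n ≠ [] ∧ 0 ≤ w n ∧ IsPrefixPow a (U n) (V n) (w n) ∧
      ρ * (((U n).length : ℝ) + (V n).length) ≤
        (((U n).length : ℝ) + powLen (V n).length (w n))) ∧
    StrictMono fun n => powLen (V n).length (w n)

/-- The Diophantine exponent of `a`. -/
noncomputable def dioExp {A : Type*} (a : ℕ → A) : ℝ := sSup {ρ : ℝ | DioCond a ρ}

/-- The subword complexity of `a`. -/
noncomputable def complexity {A : Type*} (a : ℕ → A) (n : ℕ) : ℕ :=
  Set.ncard {wd : List A | ∃ i, wd = (List.range n).map fun j => a (i + j)}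

/-- The naive height of a rational number. -/
def ratHeight (q : ℚ) : ℕ := max q.num.natAbs q.den

/-- The set of good rational approximations to `ξ` of exponent `w`;
`w₁(ξ) ≤ c` iff this set is finite for every `w > c`. -/
def approxSet {p : ℕ} [Fact p.Prime] (ξ : ℚ_[p]) (w : ℝ) : Set ℚ :=
  {α | 0 < ‖ξ - (α : ℚ_[p])‖ ∧ ‖ξ - (α : ℚ_[p])‖ ≤ (ratHeight α : ℝ) ^ (-(w + 1))}


open Finset

private lemma sum_range_add' {M : Type*} [AddCommMonoid M] (f : ℕ → M) (m n : ℕ) :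
    ∑ k ∈ range (m + n), f k = ∑ k ∈ range m, f k + ∑ k ∈ range n, f (m + k) := by
  induction n with
  | zero => simp
  | succ n ih =>
      rw [← Nat.add_assoc, sum_range_succ, ih, sum_range_succ, add_assoc]

section Padics
variable (p : ℕ) [hp : Fact p.Prime]

noncomputable def dser (c : ℕ → ℕ) : ℚ_[p] := ∑' n, (c n : ℚ_[p]) * (p : ℚ_[p]) ^ n

variable {p}

lemma one_lt_p : 1 < p := hp.out.one_lt

lemma p_inv_lt_one : ((p : ℝ))⁻¹ < 1 :=
  inv_lt_one_of_one_lt₀ (by exact_mod_cast hp.out.one_lt)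

lemma p_inv_pos : 0 < ((p : ℝ))⁻¹ := by
  have : (0:ℝ) < p := by exact_mod_cast hp.out.pos
  positivity

lemma p_inv_nonneg : 0 ≤ ((p : ℝ))⁻¹ := le_of_lt p_inv_pos

lemma norm_nat_le_one (c : ℕ) : ‖(c : ℚ_[p])‖ ≤ 1 := by
  have := Padic.norm_int_le_one (p := p) (c : ℤ)
  simpa using this

lemma norm_term_le (c : ℕ → ℕ) (n : ℕ) :
    ‖(c n : ℚ_[p]) * (p : ℚ_[p]) ^ n‖ ≤ ((p : ℝ))⁻¹ ^ n := by
  rw [norm_mul, norm_pow, Padic.norm_p]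
  calc ‖(c n : ℚ_[p])‖ * ((p:ℝ))⁻¹ ^ n ≤ 1 * ((p:ℝ))⁻¹ ^ n := by
        apply mul_le_mul_of_nonneg_right (norm_nat_le_one _) (by positivity)
    _ = ((p:ℝ))⁻¹ ^ n := one_mul _

lemma dser_summable (c : ℕ → ℕ) :
    Summable (fun n => (c n : ℚ_[p]) * (p : ℚ_[p]) ^ n) := by
  apply Summable.of_norm
  apply Summable.of_nonneg_of_le (fun n => norm_nonneg _) (norm_term_le c)
  exact summable_geometric_of_lt_one p_inv_nonneg p_inv_lt_one

lemma dser_tail (c : ℕ → ℕ) (N : ℕ) :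
    ‖dser p c - ∑ n ∈ range N, (c n : ℚ_[p]) * (p : ℚ_[p]) ^ n‖ ≤ ((p : ℝ))⁻¹ ^ N := by
  have hs := dser_summable (p := p) c
  have h1 := Summable.sum_add_tsum_nat_add (f := fun n => (c n : ℚ_[p]) * (p : ℚ_[p]) ^ n) N hs
  have h2 : dser p c - ∑ n ∈ range N, (c n : ℚ_[p]) * (p : ℚ_[p]) ^ n
      = ∑' n : ℕ, (c (n + N) : ℚ_[p]) * (p : ℚ_[p]) ^ (n + N) := by
    rw [dser, ← h1]; ring
  rw [h2]
  refine le_trans (IsUltrametricDist.norm_tsum_le _) (ciSup_le fun i => ?_)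
  refine le_trans (norm_term_le c _) ?_
  calc ((p:ℝ))⁻¹ ^ (i + N) = ((p:ℝ))⁻¹ ^ i * ((p:ℝ))⁻¹ ^ N := pow_add _ _ _
    _ ≤ 1 * ((p:ℝ))⁻¹ ^ N := by
        apply mul_le_mul_of_nonneg_right (pow_le_one₀ p_inv_nonneg (le_of_lt p_inv_lt_one)) (by positivity)
    _ = _ := one_mul _

lemma norm_int_eq_one_of_small {d : ℤ} (hd : d ≠ 0) (hdp : d.natAbs < p) :
    ‖(d : ℚ_[p])‖ = 1 := by
  have h1 : ¬ ((p:ℤ) ∣ d) := by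
    intro h
    have h2 : (p:ℤ) ≤ |d| := Int.le_of_dvd (abs_pos.mpr hd) ((dvd_abs _ _).mpr h)
    rw [Int.abs_eq_natAbs] at h2
    omega
  have h2 := (Padic.norm_intCast_lt_one_iff (p := p) (k := d)).not.mpr h1
  have h3 := Padic.norm_int_le_one (p := p) d
  exact le_antisymm h3 (not_lt.mp h2)

lemma dser_eq_digits {b c : ℕ → ℕ} (hb : ∀ n, b n < p) (hc : ∀ n, c n < p) {m : ℕ}
    (h : ‖dser p b - dser p c‖ ≤ ((p : ℝ))⁻¹ ^ m) : ∀ n, n < m → b n = c n := by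
  intro n
  induction n using Nat.strong_induction_on with
  | _ n IH =>
    intro hn
    by_contra hne
    set f : ℕ → ℚ_[p] := fun k => (b k : ℚ_[p]) * (p : ℚ_[p]) ^ k with hf
    set g : ℕ → ℚ_[p] := fun k => (c k : ℚ_[p]) * (p : ℚ_[p]) ^ k with hg
    have hsum : ∑ k ∈ range (n+1), f k - ∑ k ∈ range (n+1), g k
        = ((b n : ℚ_[p]) - (c n : ℚ_[p])) * (p : ℚ_[p]) ^ n := by
      rw [sum_range_succ, sum_range_succ]
      have : ∑ k ∈ range n, f k = ∑ k ∈ range n, g k := by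
        apply Finset.sum_congr rfl
        intro k hk
        simp only [hf, hg]
        rw [IH k (List.mem_range.mp (by simpa using hk)) (lt_trans (List.mem_range.mp (by simpa using hk)) hn)]
      rw [this]; ring
    set C : ℚ_[p] := ((b n : ℚ_[p]) - (c n : ℚ_[p])) * (p : ℚ_[p]) ^ n with hC
    have hCnorm : ‖C‖ = ((p:ℝ))⁻¹ ^ n := by
      have hd : ((b n : ℤ) - (c n : ℤ)) ≠ 0 := by
        intro hh; apply hne; omega
      have habs : ((b n : ℤ) - (c n : ℤ)).natAbs < p := by
        have := hb n; have := hc n; omega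
      have := norm_int_eq_one_of_small (p := p) hd habs
      rw [hC, norm_mul, norm_pow, Padic.norm_p]
      have hcast : ((b n : ℚ_[p]) - (c n : ℚ_[p])) = (((b n : ℤ) - (c n : ℤ) : ℤ) : ℚ_[p]) := by
        push_cast; ring
      rw [hcast, this, one_mul]
    set x : ℚ_[p] := dser p b - dser p c with hx
    have hxC : x - C = (dser p b - ∑ k ∈ range (n+1), f k) - (dser p c - ∑ k ∈ range (n+1), g k) := by
      rw [hx, ← hsum]; ring
    have hxCnorm : ‖x - C‖ ≤ ((p:ℝ))⁻¹ ^ (n+1) := by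
      rw [hxC]
      have h1 := dser_tail (p := p) b (n+1)
      have h2 := dser_tail (p := p) c (n+1)
      rw [sub_eq_add_neg (dser p b - ∑ k ∈ range (n+1), f k)]
      calc ‖(dser p b - ∑ k ∈ range (n+1), f k) + -(dser p c - ∑ k ∈ range (n+1), g k)‖
          ≤ max ‖dser p b - ∑ k ∈ range (n+1), f k‖ ‖-(dser p c - ∑ k ∈ range (n+1), g k)‖ :=
            Padic.nonarchimedean _ _
        _ ≤ ((p:ℝ))⁻¹ ^ (n+1) := by rw [norm_neg]; exact max_le h1 h2
    have hlt : ‖x - C‖ < ‖C‖ := by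
      rw [hCnorm]
      exact lt_of_le_of_lt hxCnorm (pow_lt_pow_right_of_lt_one₀ p_inv_pos p_inv_lt_one (Nat.lt_succ_self n))
    have hxnorm : ‖x‖ = ‖C‖ := by
      have : x = C + (x - C) := by ring
      rw [this]
      rw [Padic.add_eq_max_of_ne (ne_of_gt hlt)]
      exact max_eq_left (le_of_lt hlt)
    have : ((p:ℝ))⁻¹ ^ n ≤ ((p:ℝ))⁻¹ ^ m := by
      rw [← hCnorm, ← hxnorm]; exact h
    have hmono : ((p:ℝ))⁻¹ ^ m < ((p:ℝ))⁻¹ ^ n :=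
      pow_lt_pow_right_of_lt_one₀ p_inv_pos p_inv_lt_one hn
    linarith

end Padics

section B
variable (p : ℕ) [hp : Fact p.Prime]

def prefN (a : ℕ → ℕ) (i : ℕ) : ℕ := ∑ k ∈ range i, a k * p ^ k
def perN (a : ℕ → ℕ) (i t : ℕ) : ℕ := ∑ k ∈ range t, a (i + k) * p ^ k
noncomputable def betaQ (a : ℕ → ℕ) (i t : ℕ) : ℚ :=
  (prefN p a i : ℚ) + (p:ℚ)^i * (perN p a i t : ℚ) * (1 - (p:ℚ)^t)⁻¹
def bdig (a : ℕ → ℕ) (i t : ℕ) : ℕ → ℕ := fun k => if k < i then a k else a (i + (k - i) % t)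

variable {p}
variable {a : ℕ → ℕ} (ha : ∀ n, a n < p)

omit hp in
lemma digitsum_lt (i : ℕ) (c : ℕ → ℕ) (hc : ∀ n, c n < p) :
    ∑ k ∈ range i, c k * p ^ k < p ^ i := by
  induction i with
  | zero => simp
  | succ i ih =>
      rw [sum_range_succ]
      calc ∑ k ∈ range i, c k * p ^ k + c i * p ^ i < p ^ i + c i * p ^ i :=
            Nat.add_lt_add_right ih _
        _ = (c i + 1) * p ^ i := by ring
        _ ≤ p * p ^ i := Nat.mul_le_mul_right _ (hc i)
        _ = p ^ (i+1) := by ring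

include ha in
omit hp in
lemma bdig_lt (i t : ℕ) : ∀ k, bdig a i t k < p := by
  intro k; unfold bdig; split <;> apply ha

lemma bdig_eq_low (i t k : ℕ) (h : k < i) : bdig a i t k = a k := by simp [bdig, h]

lemma bdig_eq_high (i t k : ℕ) (h : i ≤ k) : bdig a i t k = a (i + (k - i) % t) := by
  simp [bdig, Nat.not_lt.mpr h]

lemma pt_ne_one {t : ℕ} (ht : 0 < t) : ((p:ℚ_[p]))^t ≠ 1 := by
  intro h
  have h1 : ‖((p:ℚ_[p]))^t‖ = ((p:ℝ))⁻¹ ^ t := by rw [norm_pow, Padic.norm_p]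
  have h2 : ((p:ℝ))⁻¹ ^ t < 1 := pow_lt_one₀ p_inv_nonneg p_inv_lt_one (by omega)
  rw [h, norm_one] at h1
  linarith [h1 ▸ h2]

lemma norm_one_sub_pt {t : ℕ} (ht : 0 < t) : ‖(1 : ℚ_[p]) - (p:ℚ_[p])^t‖ = 1 := by
  have h1 : ‖-((p:ℚ_[p])^t)‖ = ((p:ℝ))⁻¹ ^ t := by rw [norm_neg, norm_pow, Padic.norm_p]
  have h2 : ((p:ℝ))⁻¹ ^ t < 1 := pow_lt_one₀ p_inv_nonneg p_inv_lt_one (by omega)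
  have h3 : ‖(1:ℚ_[p])‖ ≠ ‖-((p:ℚ_[p])^t)‖ := by rw [norm_one, h1]; linarith
  rw [sub_eq_add_neg, Padic.add_eq_max_of_ne h3, norm_one, h1]
  exact max_eq_left (le_of_lt h2)

include ha in
lemma partial_bdig (i t : ℕ) (ht : 0 < t) (l : ℕ) :
    ∑ k ∈ range (i + l * t), (bdig a i t k : ℚ_[p]) * (p:ℚ_[p]) ^ k
      = (prefN p a i : ℚ_[p]) + (p:ℚ_[p])^i * (perN p a i t : ℚ_[p]) *
          (∑ l' ∈ range l, ((p:ℚ_[p])^t)^l') := by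
  induction l with
  | zero =>
      simp only [Nat.zero_mul, Nat.add_zero, range_zero, sum_empty, mul_zero, add_zero]
      rw [prefN, Nat.cast_sum]
      apply Finset.sum_congr rfl
      intro k hk
      rw [bdig_eq_low _ _ _ (mem_range.mp hk)]
      push_cast; ring
  | succ l ih =>
      have hr : i + (l+1) * t = (i + l * t) + t := by ring
      rw [hr, sum_range_add', ih, sum_range_succ]
      have hstep : ∑ k ∈ range t, (bdig a i t (i + l * t + k) : ℚ_[p]) * (p:ℚ_[p]) ^ (i + l * t + k)
          = (p:ℚ_[p])^i * (perN p a i t : ℚ_[p]) * ((p:ℚ_[p])^t)^l := by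
        rw [perN, Nat.cast_sum, Finset.mul_sum, Finset.sum_mul]
        apply Finset.sum_congr rfl
        intro s hs
        have hs' : s < t := mem_range.mp hs
        have hb : bdig a i t (i + l * t + s) = a (i + s) := by
          rw [bdig_eq_high _ _ _ (by omega)]
          congr 1
          have : i + l * t + s - i = l * t + s := by omega
          rw [this]
          rw [Nat.mul_comm l t, Nat.mul_add_mod]
          rw [Nat.mod_eq_of_lt hs']
        rw [hb]
        push_cast
        ring
      rw [hstep]; ring

include ha in
lemma betaQ_cast (i t : ℕ) (ht : 0 < t) :
    ((betaQ p a i t : ℚ) : ℚ_[p]) = dser p (bdig a i t) := by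
  have hx : ‖(p:ℚ_[p])^t‖ < 1 := by
    rw [norm_pow, Padic.norm_p]
    exact pow_lt_one₀ p_inv_nonneg p_inv_lt_one (by omega)
  have hne : ((p:ℚ_[p]))^t ≠ 1 := pt_ne_one ht
  have key : ∀ l : ℕ, ‖((betaQ p a i t : ℚ) : ℚ_[p]) - dser p (bdig a i t)‖ ≤ ((p:ℝ))⁻¹ ^ l := by
    intro l
    have hcast : ((betaQ p a i t : ℚ) : ℚ_[p])
        = (prefN p a i : ℚ_[p]) + (p:ℚ_[p])^i * (perN p a i t : ℚ_[p]) * (1 - (p:ℚ_[p])^t)⁻¹ := by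
      rw [betaQ]; push_cast; ring
    have hgeom : ∑ l' ∈ range l, ((p:ℚ_[p])^t)^l'
        = (1 - ((p:ℚ_[p])^t)^l) * (1 - (p:ℚ_[p])^t)⁻¹ := by
      rw [geom_sum_eq hne]
      rw [div_eq_mul_inv]
      have h1 : (1:ℚ_[p]) - (p:ℚ_[p])^t ≠ 0 := by
        intro h
        have : ((p:ℚ_[p]))^t = 1 := by linear_combination -h
        exact hne this
      have h2 : ((p:ℚ_[p])^t - 1) ≠ 0 := by intro h; apply h1; linear_combination -h
      field_simp
      ring
    have hdiff : ((betaQ p a i t : ℚ) : ℚ_[p])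
        - ∑ k ∈ range (i + l * t), (bdig a i t k : ℚ_[p]) * (p:ℚ_[p]) ^ k
        = (p:ℚ_[p])^i * (perN p a i t : ℚ_[p]) * ((p:ℚ_[p])^t)^l * (1 - (p:ℚ_[p])^t)⁻¹ := by
      rw [hcast, partial_bdig ha i t ht l, hgeom]
      ring
    have hnorm1 : ‖((betaQ p a i t : ℚ) : ℚ_[p])
        - ∑ k ∈ range (i + l * t), (bdig a i t k : ℚ_[p]) * (p:ℚ_[p]) ^ k‖ ≤ ((p:ℝ))⁻¹ ^ (i + l * t) := by
      rw [hdiff]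
      simp only [norm_mul, norm_pow, Padic.norm_p]
      have h1 : ‖(perN p a i t : ℚ_[p])‖ ≤ 1 := norm_nat_le_one _
      have h2 : ‖(1 - (p:ℚ_[p])^t)⁻¹‖ = 1 := by rw [norm_inv, norm_one_sub_pt ht, inv_one]
      rw [h2, mul_one]
      calc ((p:ℝ))⁻¹^i * ‖(perN p a i t : ℚ_[p])‖ * (((p:ℝ))⁻¹^t)^l
          ≤ ((p:ℝ))⁻¹^i * 1 * (((p:ℝ))⁻¹^t)^l := by
            apply mul_le_mul_of_nonneg_right _ (by positivity)
            exact mul_le_mul_of_nonneg_left h1 (by positivity)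
        _ = ((p:ℝ))⁻¹ ^ (i + l * t) := by rw [mul_one, ← pow_mul, ← pow_add]; ring_nf
    have hnorm2 := dser_tail (p := p) (bdig a i t) (i + l * t)
    have htri : ‖((betaQ p a i t : ℚ) : ℚ_[p]) - dser p (bdig a i t)‖ ≤ ((p:ℝ))⁻¹ ^ (i + l * t) := by
      have heq : ((betaQ p a i t : ℚ) : ℚ_[p]) - dser p (bdig a i t)
          = (((betaQ p a i t : ℚ) : ℚ_[p]) - ∑ k ∈ range (i + l * t), (bdig a i t k : ℚ_[p]) * (p:ℚ_[p]) ^ k)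
            + -(dser p (bdig a i t) - ∑ k ∈ range (i + l * t), (bdig a i t k : ℚ_[p]) * (p:ℚ_[p]) ^ k) := by
        ring
      rw [heq]
      refine le_trans (Padic.nonarchimedean _ _) ?_
      rw [norm_neg]
      exact max_le hnorm1 hnorm2
    refine le_trans htri ?_
    apply pow_le_pow_of_le_one p_inv_nonneg (le_of_lt p_inv_lt_one)
    calc l = l * 1 := (Nat.mul_one l).symm
      _ ≤ l * t := Nat.mul_le_mul_left _ ht
      _ ≤ i + l * t := Nat.le_add_left _ _
  by_contra hne2
  have hpos : 0 < ‖((betaQ p a i t : ℚ) : ℚ_[p]) - dser p (bdig a i t)‖ := by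
    rw [norm_pos_iff]; exact sub_ne_zero_of_ne hne2
  obtain ⟨l, hl⟩ := exists_pow_lt_of_lt_one hpos (p_inv_lt_one (p := p))
  exact absurd (key l) (not_le.mpr hl)

end B
section C
open Finset
variable {p : ℕ} [hp : Fact p.Prime]

lemma ratHeight_le_of_eq_div (q : ℚ) (x y : ℤ) (hy : y ≠ 0) (h : q = (x : ℚ) / y) :
    ratHeight q ≤ max x.natAbs y.natAbs := by
  have hden : ((q.den : ℤ) : ℚ) ≠ 0 := by exact_mod_cast Nat.cast_ne_zero.mpr q.den_nz
  have hyq : ((y : ℚ)) ≠ 0 := Int.cast_ne_zero.mpr hy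
  have h1 : (q.num : ℚ) / (q.den : ℚ) = (x : ℚ) / y := by rw [← h, Rat.num_div_den]
  have h2 : (q.num : ℚ) * y = x * (q.den : ℚ) := by
    field_simp at h1
    linear_combination h1
  have h3 : q.num * y = x * (q.den : ℤ) := by exact_mod_cast h2
  have hdvd_den : (q.den : ℤ) ∣ y * q.num := ⟨x, by linarith [h3]⟩
  have hden_dvd : q.den ∣ y.natAbs * q.num.natAbs := by
    have := Int.natAbs_dvd_natAbs.mpr hdvd_den
    simpa [Int.natAbs_mul] using this
  have hcop : Nat.Coprime q.den q.num.natAbs := (q.reduced).symm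
  have hden_le : q.den ≤ y.natAbs := by
    have hdvd : q.den ∣ y.natAbs := (Nat.Coprime.dvd_of_dvd_mul_right hcop hden_dvd)
    exact Nat.le_of_dvd (Int.natAbs_pos.mpr hy) hdvd
  have hnum_le : q.num.natAbs ≤ max x.natAbs y.natAbs := by
    by_cases hx : x = 0
    · have : q = 0 := by rw [h, hx]; simp
      simp [this]
    · have hdvd_num : q.num ∣ x * (q.den : ℤ) := ⟨y, by linarith [h3]⟩
      have h4 : q.num.natAbs ∣ x.natAbs * q.den := by
        have := Int.natAbs_dvd_natAbs.mpr hdvd_num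
        simpa [Int.natAbs_mul] using this
      have hdvd : q.num.natAbs ∣ x.natAbs := Nat.Coprime.dvd_of_dvd_mul_right q.reduced h4
      exact le_trans (Nat.le_of_dvd (Int.natAbs_pos.mpr hx) hdvd) (le_max_left _ _)
  exact max_le hnum_le (le_trans hden_le (le_max_right _ _))

lemma norm_int_ge (d : ℤ) (hd : d ≠ 0) : ((d.natAbs : ℝ))⁻¹ ≤ ‖(d : ℚ_[p])‖ := by
  -- write |d| = p^v * m with ¬ p ∣ m
  have h0 : d.natAbs ≠ 0 := Int.natAbs_ne_zero.mpr hd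
  set v := padicValNat p d.natAbs with hv
  obtain ⟨m, hm⟩ : p ^ v ∣ d.natAbs := pow_padicValNat_dvd
  have hm0 : m ≠ 0 := by rintro rfl; rw [Nat.mul_zero] at hm; exact h0 hm
  have hpm : ¬ p ∣ m := by
    intro hdvd
    have : p ^ (v + 1) ∣ d.natAbs := by
      obtain ⟨m', rfl⟩ := hdvd
      exact ⟨m', by rw [hm]; ring⟩
    exact pow_succ_padicValNat_not_dvd h0 this
  have hnd : ‖(d : ℚ_[p])‖ = ‖((d.natAbs : ℕ) : ℚ_[p])‖ := by
    have h1 : ((d.natAbs : ℕ) : ℤ) = |d| := (Int.abs_eq_natAbs d).symm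
    have habs : ((d.natAbs : ℕ) : ℚ_[p]) = ((|d| : ℤ) : ℚ_[p]) := by
      rw [← h1]; exact (Int.cast_natCast d.natAbs).symm
    rw [habs]
    rcases abs_choice d with h | h <;> rw [h]
    push_cast
    rw [norm_neg]
  have hmnorm : ‖((m : ℕ) : ℚ_[p])‖ = 1 := by
    have h1 : ¬ ((p:ℤ) ∣ (m:ℤ)) := by exact_mod_cast hpm
    have h2 := (Padic.norm_intCast_lt_one_iff (p := p) (k := (m:ℤ))).not.mpr h1
    have h3 := Padic.norm_int_le_one (p := p) (m:ℤ)
    have : ‖((m:ℤ) : ℚ_[p])‖ = 1 := le_antisymm h3 (not_lt.mp h2)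
    simpa using this
  have hsplit : ‖((d.natAbs : ℕ) : ℚ_[p])‖ = ((p:ℝ))⁻¹ ^ v := by
    rw [hm]
    push_cast
    rw [norm_mul, norm_pow, Padic.norm_p, hmnorm, mul_one]
  rw [hnd, hsplit]
  have hple : (p:ℝ) ^ v ≤ (d.natAbs : ℝ) := by
    have : p ^ v ≤ d.natAbs := Nat.le_of_dvd (Nat.pos_of_ne_zero h0) ⟨m, hm⟩
    exact_mod_cast this
  have hppos : (0:ℝ) < (p:ℝ) ^ v := by
    have : (0:ℝ) < p := by exact_mod_cast hp.out.pos
    positivity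
  rw [inv_pow]
  apply inv_anti₀ hppos hple

lemma liouville_rat (α β : ℚ) (hne : α ≠ β) :
    ((2 * ratHeight α * ratHeight β : ℕ) : ℝ)⁻¹ ≤ ‖((α : ℚ_[p]) - (β : ℚ_[p]))‖ := by
  have hcast : (α : ℚ_[p]) - (β : ℚ_[p]) = ((α - β : ℚ) : ℚ_[p]) := by push_cast; ring
  set D : ℤ := α.num * (β.den : ℤ) - β.num * (α.den : ℤ) with hD
  have hαden : ((α.den : ℚ)) ≠ 0 := by exact_mod_cast α.den_nz
  have hβden : ((β.den : ℚ)) ≠ 0 := by exact_mod_cast β.den_nz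
  have hX : ((α.den : ℚ) * (β.den : ℚ)) ≠ 0 := mul_ne_zero hαden hβden
  have hnum1 : (α.num : ℚ) = α * (α.den : ℚ) := by
    have h := Rat.num_div_den α
    rw [div_eq_iff hαden] at h
    exact h
  have hnum2 : (β.num : ℚ) = β * (β.den : ℚ) := by
    have h := Rat.num_div_den β
    rw [div_eq_iff hβden] at h
    exact h
  have hq : (α - β : ℚ) = (D : ℚ) / ((α.den : ℚ) * (β.den : ℚ)) := by
    rw [eq_div_iff hX, hD]
    push_cast
    rw [hnum1, hnum2]
    ring
  have hDne : D ≠ 0 := by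
    intro h
    apply hne
    have : (α - β : ℚ) = 0 := by rw [hq, h]; simp
    exact sub_eq_zero.mp this
  have hnormden : ‖((((α.den : ℤ) * (β.den : ℤ) : ℤ)) : ℚ_[p])‖ ≤ 1 := Padic.norm_int_le_one _
  have hnormden_pos : 0 < ‖((((α.den : ℤ) * (β.den : ℤ) : ℤ)) : ℚ_[p])‖ := by
    rw [norm_pos_iff]
    simp only [ne_eq, Int.cast_eq_zero]
    positivity
  have hcast2 : ((α - β : ℚ) : ℚ_[p]) = ((D : ℤ) : ℚ_[p]) / (((α.den : ℤ) * (β.den : ℤ) : ℤ) : ℚ_[p]) := by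
    rw [hq]; push_cast; ring
  have hnorm : ‖((α - β : ℚ) : ℚ_[p])‖ = ‖((D : ℤ) : ℚ_[p])‖ / ‖(((α.den : ℤ) * (β.den : ℤ) : ℤ) : ℚ_[p])‖ := by
    rw [hcast2, norm_div]
  have h1 : ‖((D : ℤ) : ℚ_[p])‖ ≤ ‖((α - β : ℚ) : ℚ_[p])‖ := by
    rw [hnorm]
    rw [le_div_iff₀ hnormden_pos]
    calc ‖((D:ℤ) : ℚ_[p])‖ * ‖(((α.den : ℤ) * (β.den : ℤ) : ℤ) : ℚ_[p])‖
        ≤ ‖((D:ℤ) : ℚ_[p])‖ * 1 := by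
          apply mul_le_mul_of_nonneg_left hnormden (norm_nonneg _)
      _ = ‖((D:ℤ) : ℚ_[p])‖ := mul_one _
  have h2 : ((D.natAbs : ℝ))⁻¹ ≤ ‖((D:ℤ) : ℚ_[p])‖ := norm_int_ge D hDne
  have h3 : D.natAbs ≤ 2 * ratHeight α * ratHeight β := by
    have hb1 : α.num.natAbs ≤ ratHeight α := le_max_left _ _
    have hb2 : α.den ≤ ratHeight α := le_max_right _ _
    have hb3 : β.num.natAbs ≤ ratHeight β := le_max_left _ _
    have hb4 : β.den ≤ ratHeight β := le_max_right _ _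
    calc D.natAbs ≤ (α.num * (β.den : ℤ)).natAbs + (β.num * (α.den : ℤ)).natAbs :=
          Int.natAbs_sub_le _ _
      _ = α.num.natAbs * β.den + β.num.natAbs * α.den := by
          rw [Int.natAbs_mul, Int.natAbs_mul]; simp
      _ ≤ ratHeight α * ratHeight β + ratHeight β * ratHeight α := by
          apply Nat.add_le_add <;> exact Nat.mul_le_mul (by assumption) (by assumption)
      _ = 2 * ratHeight α * ratHeight β := by ring
  have h4 : ((2 * ratHeight α * ratHeight β : ℕ) : ℝ)⁻¹ ≤ ((D.natAbs : ℝ))⁻¹ := by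
    apply inv_anti₀
    · exact_mod_cast Int.natAbs_pos.mpr hDne
    · exact_mod_cast h3
  rw [hcast]
  exact le_trans h4 (le_trans h2 h1)

lemma finite_ratHeight_le (B : ℕ) : {q : ℚ | ratHeight q ≤ B}.Finite := by
  have hsub : {q : ℚ | ratHeight q ≤ B} ⊆
      (fun x : ℤ × ℤ => (x.1 : ℚ) / (x.2 : ℚ)) '' (Set.Icc (-(B:ℤ)) B ×ˢ Set.Icc (-(B:ℤ)) B) := by
    intro q hq
    refine ⟨(q.num, (q.den : ℤ)), ?_, ?_⟩
    · simp only [Set.mem_prod, Set.mem_Icc]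
      have h1 : q.num.natAbs ≤ B := le_trans (le_max_left _ _) hq
      have h2 : q.den ≤ B := le_trans (le_max_right _ _) hq
      omega
    · simp [Rat.num_div_den]
  exact Set.Finite.subset (Set.Finite.image _ ((Set.finite_Icc _ _).prod (Set.finite_Icc _ _))) hsub

end C
section D
open Finset

variable {a : ℕ → ℕ}

lemma getD_map_range {A : Type*} (f : ℕ → A) (m k : ℕ) (h : k < m) (d : A) :
    ((List.range m).map f).getD k d = f k := by
  rw [List.getD_eq_getElem?_getD, List.getElem?_map, List.getElem?_range h]
  rfl

lemma powLen_div (s P : ℕ) (hs : s ≠ 0) : powLen s ((P : ℚ) / s) = P := by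
  have hsQ : ((s:ℚ)) ≠ 0 := Nat.cast_ne_zero.mpr hs
  have h1 : ⌊(P:ℚ)/(s:ℚ)⌋ = ((P / s : ℕ) : ℤ) := by
    exact_mod_cast Rat.floor_natCast_div_natCast P s
  have hP : ((s:ℚ)) * ((P / s : ℕ) : ℚ) + ((P % s : ℕ) : ℚ) = (P:ℚ) := by
    exact_mod_cast Nat.div_add_mod P s
  have h2 : ((P:ℚ)/s - (⌊(P:ℚ)/(s:ℚ)⌋ : ℚ)) * s = ((P % s : ℕ) : ℚ) := by
    rw [h1, Int.cast_natCast, sub_mul, div_mul_cancel₀ _ hsQ]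
    linear_combination -hP
  rw [powLen, h2, h1]
  rw [Int.toNat_natCast]
  have h3 : ⌈((P % s : ℕ) : ℚ)⌉ = ((P % s : ℕ) : ℤ) := Int.ceil_natCast _
  rw [h3, Int.toNat_natCast]
  rw [Nat.mul_comm]
  exact Nat.div_add_mod P s

lemma periodic_ext (i t n : ℕ) (ht : 0 < t)
    (h : ∀ k, k < n → a (i + k) = a (i + t + k)) :
    ∀ k, k < n + t → a (i + k) = a (i + k % t) := by
  intro k
  induction k using Nat.strong_induction_on with
  | _ k IH =>
    intro hk
    by_cases hkt : k < t
    · rw [Nat.mod_eq_of_lt hkt]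
    · push_neg at hkt
      have h1 : a (i + (k - t)) = a (i + k) := by
        have h2 := h (k - t) (by omega)
        have h3 : i + t + (k - t) = i + k := by omega
        rw [h3] at h2
        exact h2
      have h2 := IH (k - t) (by omega) (by omega)
      have h3 : (k - t) % t = k % t := (Nat.mod_eq_sub_mod hkt).symm
      rw [← h1, h2, h3]

lemma exists_rep {p : ℕ} (ha : ∀ n, a n < p) (κ n₀ : ℕ)
    (hcomp : ∀ n, n₀ ≤ n → complexity a n ≤ κ * n) (n : ℕ) (hn : n₀ ≤ n) :
    ∃ i j, i < j ∧ j ≤ κ * n ∧ ∀ k, k < n → a (i + k) = a (j + k) := by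
  classical
  set S := {wd : List ℕ | ∃ i, wd = (List.range n).map fun j => a (i + j)} with hS
  have hfin : S.Finite := by
    have hsub : S ⊆ (fun f : Fin n → Fin p => (List.range n).map
        fun j => if h : j < n then (f ⟨j, h⟩ : ℕ) else 0) '' Set.univ := by
      rintro wd ⟨i, rfl⟩
      refine ⟨fun j => ⟨a (i + j), ha _⟩, Set.mem_univ _, ?_⟩
      apply List.map_congr_left
      intro j hj
      rw [dif_pos (List.mem_range.mp hj)]
    exact Set.Finite.subset (Set.finite_univ.image _) hsub
  have hcard : hfin.toFinset.card ≤ κ * n := by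
    have h1 := hcomp n hn
    rw [complexity, ← hS, Set.ncard_eq_toFinset_card S hfin] at h1
    exact h1
  have hmaps : ∀ i ∈ Finset.range (κ * n + 1),
      ((List.range n).map fun j => a (i + j)) ∈ hfin.toFinset := by
    intro i _
    rw [Set.Finite.mem_toFinset]
    exact ⟨i, rfl⟩
  obtain ⟨x, hx, y, hy, hxy, hf⟩ := Finset.exists_ne_map_eq_of_card_lt_of_maps_to
    (by rw [Finset.card_range]; omega) hmaps
  have key : ∀ x y : ℕ, ((List.range n).map fun j => a (x + j)) =
      ((List.range n).map fun j => a (y + j)) → ∀ k, k < n → a (x + k) = a (y + k) := by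
    intro x y hmap k hk
    have h1 := congrArg (fun l => l.getD k (a 0)) hmap
    rwa [getD_map_range _ _ _ hk, getD_map_range _ _ _ hk] at h1
  rcases Nat.lt_or_ge x y with hlt | hge
  · exact ⟨x, y, hlt, by have := Finset.mem_range.mp hy; omega, key x y hf⟩
  · have hlt : y < x := by omega
    exact ⟨y, x, hlt, by have := Finset.mem_range.mp hx; omega, fun k hk => (key x y hf k hk).symm⟩

/-- A repetition in `a` starting at `i` with period `t` and power-length `P`. -/
def RepW (a : ℕ → ℕ) (ρ : ℝ) (i t P : ℕ) : Prop :=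
  0 < t ∧ (∀ k, i ≤ k → k < i + P → a k = a (i + (k - i) % t)) ∧
    ρ * ((i : ℝ) + t) ≤ (i : ℝ) + P

lemma isPrefixPow_of_rep (ρ : ℝ) (i t P : ℕ) (h : RepW a ρ i t P) :
    IsPrefixPow a ((List.range i).map a) ((List.range t).map fun k => a (i + k)) ((P : ℚ) / t) := by
  obtain ⟨ht, hper, _⟩ := h
  have hlenU : ((List.range i).map a).length = i := by simp
  have hlenV : ((List.range t).map fun k => a (i + k)).length = t := by simp
  constructor
  · intro k hk
    rw [hlenU] at hk
    rw [getD_map_range _ _ _ hk]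
  · intro k hk1 hk2
    rw [hlenU] at hk1
    rw [hlenU, hlenV, powLen_div t P (by omega)] at hk2
    rw [hlenU, hlenV]
    rw [getD_map_range _ _ _ (Nat.mod_lt _ ht)]
    exact hper k hk1 hk2

lemma dioCond_of_reps (ρ : ℝ) (h : ∀ M : ℕ, ∃ i t P : ℕ, M < P ∧ RepW a ρ i t P) :
    DioCond a ρ := by
  classical
  choose I T P h1 h2 using h
  set idx : ℕ → ℕ := fun n => Nat.rec 0 (fun _ M => P M) n with hidx
  have hidxs : ∀ n, idx (n + 1) = P (idx n) := fun n => rfl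
  have hmono : StrictMono fun n => P (idx n) := by
    apply strictMono_nat_of_lt_succ
    intro n
    rw [hidxs]
    exact h1 (P (idx n))
  refine ⟨fun n => (List.range (I (idx n))).map a,
    fun n => (List.range (T (idx n))).map fun k => a (I (idx n) + k),
    fun n => ((P (idx n) : ℚ)) / (T (idx n)), fun n => ?_, ?_⟩
  · obtain ⟨ht, hper, hineq⟩ := h2 (idx n)
    refine ⟨?_, ?_, isPrefixPow_of_rep ρ _ _ _ (h2 (idx n)), ?_⟩
    · simp only [ne_eq, List.map_eq_nil_iff, List.range_eq_nil]
      omega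
    · positivity
    · have hlenU : ((List.range (I (idx n))).map a).length = I (idx n) := by simp
      have hlenV : ((List.range (T (idx n))).map fun k => a (I (idx n) + k)).length = T (idx n) := by simp
      rw [hlenU, hlenV, powLen_div _ _ (by omega)]
      exact hineq
  · have hlenV : ∀ n, ((List.range (T (idx n))).map fun k => a (I (idx n) + k)).length = T (idx n) := by
      intro n; simp
    have heq : (fun n => powLen ((List.range (T (idx n))).map fun k => a (I (idx n) + k)).length
        ((P (idx n) : ℚ) / (T (idx n)))) = fun n => P (idx n) := by
      funext n
      rw [hlenV n, powLen_div _ _ (by have := (h2 (idx n)).1; omega)]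
    rw [heq]
    exact hmono

lemma dioCond_one : DioCond a 1 := by
  have h : ∀ M : ℕ, ∃ i t P : ℕ, M < P ∧ RepW a 1 i t P := by
    intro M
    refine ⟨0, M + 1, M + 1, by omega, by omega, ?_, by push_cast; norm_num⟩
    intro k hk1 hk2
    simp only [Nat.zero_add, Nat.sub_zero] at *
    rw [Nat.mod_eq_of_lt (by omega)]
  exact dioCond_of_reps 1 h

end D
section E
open Finset
variable {p : ℕ} [hp : Fact p.Prime] {a : ℕ → ℕ}

lemma dser_close (b c : ℕ → ℕ) (N : ℕ) (h : ∀ k, k < N → b k = c k) :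
    ‖dser p b - dser p c‖ ≤ ((p:ℝ))⁻¹ ^ N := by
  have hsum : ∑ k ∈ range N, (b k : ℚ_[p]) * (p:ℚ_[p])^k
      = ∑ k ∈ range N, (c k : ℚ_[p]) * (p:ℚ_[p])^k := by
    apply Finset.sum_congr rfl
    intro k hk
    rw [h k (mem_range.mp hk)]
  have heq : dser p b - dser p c
      = (dser p b - ∑ k ∈ range N, (b k : ℚ_[p]) * (p:ℚ_[p])^k)
        + -(dser p c - ∑ k ∈ range N, (c k : ℚ_[p]) * (p:ℚ_[p])^k) := by
    rw [hsum]; ring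
  rw [heq]
  refine le_trans (Padic.nonarchimedean _ _) ?_
  rw [norm_neg]
  exact max_le (dser_tail _ _) (dser_tail _ _)

lemma ratHeight_betaQ (ha : ∀ n, a n < p) (i t : ℕ) (ht : 0 < t) :
    ratHeight (betaQ p a i t) ≤ p ^ (i + t + 1) := by
  have hp2 : 2 ≤ p := hp.out.two_le
  set X : ℤ := (prefN p a i : ℤ) * (1 - (p:ℤ)^t) + (p:ℤ)^i * (perN p a i t : ℤ) with hX
  set Y : ℤ := 1 - (p:ℤ)^t with hY
  have hpt1 : (1:ℤ) < (p:ℤ)^t := by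
    have : (1:ℤ) < (p:ℤ) := by exact_mod_cast hp.out.one_lt
    exact one_lt_pow₀ this (by omega)
  have hy : Y ≠ 0 := by rw [hY]; omega
  have hyQ : (1 - (p:ℚ)^t) ≠ 0 := by
    intro hcon
    apply hy
    rw [hY]
    have : ((1 - (p:ℤ)^t : ℤ) : ℚ) = 0 := by push_cast; linear_combination hcon
    exact_mod_cast this
  have heq : betaQ p a i t = (X : ℚ) / (Y : ℚ) := by
    rw [betaQ, hX, hY]
    push_cast
    field_simp
  refine le_trans (ratHeight_le_of_eq_div _ X Y hy heq) ?_
  have hpre : (prefN p a i : ℤ) < (p:ℤ)^i := by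
    have := digitsum_lt (p := p) i a ha
    rw [prefN]
    exact_mod_cast this
  have hper : (perN p a i t : ℤ) < (p:ℤ)^t := by
    have := digitsum_lt (p := p) t (fun k => a (i + k)) (fun n => ha _)
    rw [perN]
    exact_mod_cast this
  have hpre0 : (0:ℤ) ≤ (prefN p a i : ℤ) := Int.natCast_nonneg _
  have hper0 : (0:ℤ) ≤ (perN p a i t : ℤ) := Int.natCast_nonneg _
  have hpi : (0:ℤ) < (p:ℤ)^i := by positivity
  have hbound : ∀ z : ℤ, z ∈ ({X, Y} : Set ℤ) → |z| ≤ (p:ℤ)^(i+t+1) := by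
    intro z hz
    have hptpos : (0:ℤ) < (p:ℤ)^t := by positivity
    have hYabs : |Y| = (p:ℤ)^t - 1 := by rw [hY, abs_of_nonpos (by omega)]; ring
    have hpexp : (p:ℤ)^(i+t+1) = (p:ℤ)^i * (p:ℤ)^t * (p:ℤ) := by ring
    have hp2' : (2:ℤ) ≤ (p:ℤ) := by exact_mod_cast hp2
    rcases hz with rfl | hz
    · calc |X| ≤ |(prefN p a i : ℤ) * Y| + |(p:ℤ)^i * (perN p a i t : ℤ)| := abs_add_le _ _
        _ = (prefN p a i : ℤ) * ((p:ℤ)^t - 1) + (p:ℤ)^i * (perN p a i t : ℤ) := by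
            rw [abs_mul, abs_mul, abs_of_nonneg hpre0, hYabs, abs_of_nonneg (by positivity),
              abs_of_nonneg hper0]
        _ ≤ (p:ℤ)^i * (p:ℤ)^t + (p:ℤ)^i * (p:ℤ)^t := by
            apply add_le_add
            · apply mul_le_mul (by omega) (by omega) (by omega) (by positivity)
            · exact mul_le_mul_of_nonneg_left (le_of_lt hper) (le_of_lt hpi)
        _ ≤ (p:ℤ)^(i+t+1) := by
            rw [hpexp]
            nlinarith [mul_pos hpi hptpos]
    · rcases hz with rfl
      rw [hYabs, hpexp]
      have h1 : (p:ℤ)^t ≤ (p:ℤ)^i * (p:ℤ)^t := le_mul_of_one_le_left (le_of_lt hptpos) (by omega)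
      have h2 : (p:ℤ)^i * (p:ℤ)^t ≤ (p:ℤ)^i * (p:ℤ)^t * (p:ℤ) :=
        le_mul_of_one_le_right (by positivity) (by exact_mod_cast hp.out.one_le)
      linarith
  have hXle : X.natAbs ≤ p ^ (i+t+1) := by
    have h := hbound X (by simp)
    rw [Int.abs_eq_natAbs] at h
    exact_mod_cast h
  have hYle : Y.natAbs ≤ p ^ (i+t+1) := by
    have h := hbound Y (by simp)
    rw [Int.abs_eq_natAbs] at h
    exact_mod_cast h
  exact max_le hXle hYle

end E
set_option maxHeartbeats 1000000 in
/-- If the digits of `ξ` have linear complexity and finite Diophantine exponent,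
then `w₁(ξ) ≤ 8(κ+1)²(2κ+1)·Dio(a) − 1`; in particular `ξ` is not a `U₁`-number. -/
theorem w_one_le_of_linear_complexity_and_finite_dio
    (p : ℕ) [Fact p.Prime] (a : ℕ → ℕ) (ha : ∀ n, a n < p)
    (hnp : ¬ UltimatelyPeriodic a)
    (κ n₀ : ℕ) (hκ : 2 ≤ κ) (hn₀ : 1 ≤ n₀)
    (hcomp : ∀ n, n₀ ≤ n → complexity a n ≤ κ * n)
    (hfin : BddAbove {ρ : ℝ | DioCond a ρ}) :
    ∀ w : ℝ, 8 * ((κ : ℝ) + 1) ^ 2 * (2 * κ + 1) * dioExp a - 1 < w →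
      (approxSet (∑' n : ℕ, (a n : ℚ_[p]) * (p : ℚ_[p]) ^ n) w).Finite := by
  intro w hw
  classical
  set ξ : ℚ_[p] := ∑' n : ℕ, (a n : ℚ_[p]) * (p : ℚ_[p]) ^ n with hξ
  have hξd : ξ = dser p a := rfl
  by_contra hinf
  have hp2 : 2 ≤ p := ‹Fact p.Prime›.out.two_le
  have hpR : (1:ℝ) < (p:ℝ) := by exact_mod_cast ‹Fact p.Prime›.out.one_lt
  have hD1 : (1:ℝ) ≤ dioExp a := le_csSup hfin dioCond_one
  have hκR : (2:ℝ) ≤ (κ:ℝ) := by exact_mod_cast hκ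
  have hA : (0:ℝ) ≤ 8 * ((κ:ℝ) + 1) ^ 2 * (2 * κ + 1) := by positivity
  have hAD : 8 * ((κ:ℝ) + 1) ^ 2 * (2 * κ + 1)
      ≤ 8 * ((κ:ℝ) + 1) ^ 2 * (2 * κ + 1) * dioExp a := le_mul_of_one_le_right hA hD1
  have hB : (2 * (κ:ℝ) + 2) ≤ 8 * ((κ:ℝ) + 1) ^ 2 * (2 * κ + 1) := by nlinarith [hκR]
  have hwk : (κ:ℝ) + 1 ≤ w := by linarith
  have hwκ2 : 2 * (κ:ℝ) + 1 ≤ w + 1 := by linarith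
  have hw0 : (0:ℝ) < w + 1 := by linarith
  set ρ : ℝ := (w + 1) / (2 * κ) with hρ
  have hρ0 : 0 ≤ ρ := by rw [hρ]; positivity
  have hρD : dioExp a < ρ := by
    rw [hρ, lt_div_iff₀ (by positivity)]
    have hprod : 0 ≤ (8 * ((κ:ℝ) + 1) ^ 2 * (2 * κ + 1) - (2 * κ + 2)) * dioExp a :=
      mul_nonneg (by linarith) (by linarith)
    nlinarith [hw, hprod, hD1]
  have hbig : ∀ B : ℕ, ∃ α, α ∈ approxSet ξ w ∧ B < ratHeight α := by
    intro B
    by_contra hno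
    push_neg at hno
    exact hinf (Set.Finite.subset (finite_ratHeight_le B) (fun q hq => hno q hq))
  have hrep : ∀ M : ℕ, ∃ i t P : ℕ, M < P ∧ RepW a ρ i t P := by
    intro M
    set C₁ : ℕ := p ^ (κ * (n₀ + 4) + 1) with hC₁
    obtain ⟨α, hαmem, hαH⟩ := hbig (max (2 * C₁) (max (p ^ (n₀ + 4)) (p ^ (M + 1))))
    obtain ⟨hα0, hαle⟩ := hαmem
    set H := ratHeight α with hH
    have hH1 : 1 ≤ H := le_trans (Rat.den_pos α) (le_max_right _ _)
    have hHR0 : (0:ℝ) < (H:ℝ) := by exact_mod_cast hH1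
    have hHR1 : (1:ℝ) ≤ (H:ℝ) := by exact_mod_cast hH1
    set L := Nat.log p H with hL
    set n := n₀ + L + 4 with hn
    obtain ⟨i, j, hij, hjn, hagree⟩ := exists_rep ha κ n₀ hcomp n (by omega)
    set t := j - i with ht
    have htpos : 0 < t := by omega
    have hjit : j = i + t := by omega
    have hper : ∀ k, k < n + t → a (i + k) = a (i + k % t) := by
      apply periodic_ext i t n htpos
      intro k hk
      have h1 := hagree k hk
      rw [hjit] at h1
      exact h1
    have hab : ∀ k, k < n + j → a k = bdig a i t k := by
      intro k hk
      by_cases hki : k < i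
      · rw [bdig_eq_low _ _ _ hki]
      · push_neg at hki
        rw [bdig_eq_high _ _ _ hki]
        have h1 : k - i < n + t := by omega
        have h2 := hper (k - i) h1
        rw [Nat.add_sub_cancel' hki] at h2
        exact h2
    set β := betaQ p a i t with hβdef
    have hβd : ((β : ℚ) : ℚ_[p]) = dser p (bdig a i t) := by
      rw [hβdef]; exact betaQ_cast ha i t htpos
    have hξβ : ‖ξ - ((β : ℚ) : ℚ_[p])‖ ≤ ((p:ℝ))⁻¹ ^ (n + j) := by
      rw [hξd, hβd]
      exact dser_close a (bdig a i t) (n + j) hab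
    have hHβ : ratHeight β ≤ p ^ (j + 1) := by
      have h1 := ratHeight_betaQ ha i t htpos
      rw [← hβdef] at h1
      rw [hjit]
      exact h1
    have hHβ1 : 1 ≤ ratHeight β := le_trans (Rat.den_pos β) (le_max_right _ _)
    have h2C : 2 * C₁ < H := lt_of_le_of_lt (le_max_left _ _) hαH
    have hpn4 : p ^ (n₀ + 4) < H :=
      lt_of_le_of_lt (le_trans (le_max_left _ _) (le_max_right _ _)) hαH
    have hpM : p ^ (M + 1) < H :=
      lt_of_le_of_lt (le_trans (le_max_right _ _) (le_max_right _ _)) hαH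
    have hLn : n₀ + 4 ≤ L :=
      (Nat.le_log_iff_pow_le (by omega) (by omega)).mpr (le_of_lt hpn4)
    have hLM : M + 1 ≤ L :=
      (Nat.le_log_iff_pow_le (by omega) (by omega)).mpr (le_of_lt hpM)
    have hpL : p ^ L ≤ H := Nat.pow_log_le_self p (by omega)
    have hpL2 : H < p ^ (L + 1) := Nat.lt_pow_succ_log_self (by omega) H
    by_cases hαβ : α = β
    · -- the approximation coincides with the periodic rational: long repetition
      rw [hαβ] at hα0 hαle
      have hx0 : ξ - ((β : ℚ) : ℚ_[p]) ≠ 0 := by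
        intro hcon
        rw [hcon] at hα0
        simp at hα0
      set v := (ξ - ((β : ℚ) : ℚ_[p])).valuation with hv
      have hnx : ‖ξ - ((β : ℚ) : ℚ_[p])‖ = (p:ℝ) ^ (-v) := Padic.norm_eq_zpow_neg_valuation hx0
      have hvnj : ((n + j : ℕ) : ℤ) ≤ v := by
        have h1 : (p:ℝ) ^ (-v) ≤ (p:ℝ) ^ (-((n + j : ℕ) : ℤ)) := by
          rw [← hnx]
          calc ‖ξ - ((β : ℚ) : ℚ_[p])‖ ≤ ((p:ℝ))⁻¹ ^ (n + j) := hξβ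
            _ = (p:ℝ) ^ (-((n + j : ℕ) : ℤ)) := by
                rw [zpow_neg, zpow_natCast, inv_pow]
        have h2 := (zpow_le_zpow_iff_right₀ hpR).mp h1
        omega
      have hv0 : 0 ≤ v := le_trans (by positivity) hvnj
      set m := v.toNat with hm
      have hmv : (m : ℤ) = v := Int.toNat_of_nonneg hv0
      have hxm : ‖ξ - ((β : ℚ) : ℚ_[p])‖ = ((p:ℝ))⁻¹ ^ m := by
        rw [hnx, ← hmv, zpow_neg, zpow_natCast, inv_pow]
      have hdig : ∀ k, k < m → a k = bdig a i t k := by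
        apply dser_eq_digits ha (bdig_lt ha i t)
        calc ‖dser p a - dser p (bdig a i t)‖ = ‖ξ - ((β : ℚ) : ℚ_[p])‖ := by rw [hξd, hβd]
          _ ≤ ((p:ℝ))⁻¹ ^ m := le_of_eq hxm
      have hmnj : n + j ≤ m := by omega
      have him : i ≤ m := by omega
      have hlogp : 0 < Real.log p := Real.log_pos hpR
      have hLlog : (L:ℝ) * Real.log p ≤ Real.log H := by
        have h1 : ((p:ℝ)) ^ L ≤ (H:ℝ) := by exact_mod_cast hpL
        have h2 := Real.log_le_log (by positivity) h1
        rwa [Real.log_pow] at h2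
      have hmlog : (w + 1) * Real.log H ≤ (m:ℝ) * Real.log p := by
        have h1 : ((p:ℝ))⁻¹ ^ m ≤ (H:ℝ) ^ (-(w + 1)) := hxm ▸ hαle
        have h2 := Real.log_le_log (by positivity) h1
        rw [Real.log_rpow hHR0, Real.log_pow, Real.log_inv] at h2
        linarith
      have hmL : (w + 1) * (L:ℝ) ≤ (m:ℝ) := by
        have h2 : (w + 1) * (L:ℝ) * Real.log p ≤ (m:ℝ) * Real.log p := by
          calc (w + 1) * (L:ℝ) * Real.log p = (w + 1) * ((L:ℝ) * Real.log p) := by ring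
            _ ≤ (w + 1) * Real.log H := mul_le_mul_of_nonneg_left hLlog (le_of_lt hw0)
            _ ≤ (m:ℝ) * Real.log p := hmlog
        exact le_of_mul_le_mul_right h2 hlogp
      have hjL : (j:ℝ) ≤ 2 * (κ:ℝ) * (L:ℝ) := by
        have h1 : j ≤ κ * (2 * L) := le_trans hjn (Nat.mul_le_mul_left κ (by omega))
        calc (j:ℝ) ≤ ((κ * (2 * L) : ℕ) : ℝ) := by exact_mod_cast h1
          _ = 2 * (κ:ℝ) * (L:ℝ) := by push_cast; ring
      have hρj : ρ * ((i:ℝ) + (t:ℝ)) ≤ (m:ℝ) := by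
        have hjcast : (i:ℝ) + (t:ℝ) = (j:ℝ) := by
          rw [hjit]; push_cast; ring
        rw [hjcast]
        calc ρ * (j:ℝ) ≤ ρ * (2 * (κ:ℝ) * (L:ℝ)) := mul_le_mul_of_nonneg_left hjL hρ0
          _ = (w + 1) * (L:ℝ) := by
              rw [hρ]
              field_simp
          _ ≤ (m:ℝ) := hmL
      have hmMi : (i:ℝ) + ((M:ℝ) + 1) ≤ (m:ℝ) := by
        have hL0 : (0:ℝ) ≤ (L:ℝ) := by positivity
        have h1 : (2 * (κ:ℝ) + 1) * (L:ℝ) ≤ (w + 1) * (L:ℝ) :=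
          mul_le_mul_of_nonneg_right hwκ2 hL0
        have h2 : (i:ℝ) < (j:ℝ) := by exact_mod_cast hij
        have h3 : ((M:ℝ) + 1) ≤ (L:ℝ) := by exact_mod_cast hLM
        linarith [hjL, hmL]
      have hMm : i + (M + 1) ≤ m := by
        have h1 : ((i + (M + 1) : ℕ) : ℝ) ≤ (m:ℝ) := by push_cast; linarith
        exact_mod_cast h1
      refine ⟨i, t, m - i, by omega, htpos, ?_, ?_⟩
      · intro k hk1 hk2
        have hkm : k < m := by omega
        rw [hdig k hkm, bdig_eq_high _ _ _ hk1]
      · have hcast : ((m - i : ℕ) : ℝ) = (m:ℝ) - (i:ℝ) := by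
          rw [Nat.cast_sub him]
        rw [hcast]
        linarith [hρj]
    · -- α ≠ β is impossible for H this large
      exfalso
      have hliou := liouville_rat (p := p) α β hαβ
      have hnat : 2 * H * ratHeight β < p ^ (n + j) := by
        calc 2 * H * ratHeight β ≤ 2 * H * p ^ (j + 1) := Nat.mul_le_mul_left _ hHβ
          _ < 2 * p ^ (L + 1) * p ^ (j + 1) := by
              have hpj : 0 < p ^ (j+1) := Nat.pow_pos (by omega)
              exact (Nat.mul_lt_mul_right hpj).mpr (by omega)
          _ = 2 * p ^ (L + j + 2) := by ring
          _ ≤ p ^ (L + j + 3) := by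
              have h1 : p ^ (L + j + 3) = p * p ^ (L + j + 2) := by ring
              rw [h1]
              exact Nat.mul_le_mul_right _ hp2
          _ ≤ p ^ (n + j) := Nat.pow_le_pow_right (by omega) (by omega)
      have hpos2 : (0:ℝ) < ((2 * H * ratHeight β : ℕ) : ℝ) := by
        have h1 : 0 < 2 * H * ratHeight β := by positivity
        exact_mod_cast h1
      have hltinv : ((p:ℝ))⁻¹ ^ (n + j) < ((2 * H * ratHeight β : ℕ) : ℝ)⁻¹ := by
        rw [inv_pow]
        apply (inv_lt_inv₀ (by positivity) hpos2).mpr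
        exact_mod_cast hnat
      have hξβlt : ‖ξ - ((β : ℚ) : ℚ_[p])‖ < ‖(α : ℚ_[p]) - ((β : ℚ) : ℚ_[p])‖ :=
        lt_of_lt_of_le (lt_of_le_of_lt hξβ hltinv) hliou
      have hultra : ‖(α : ℚ_[p]) - ((β : ℚ) : ℚ_[p])‖
          ≤ max ‖(α : ℚ_[p]) - ξ‖ ‖ξ - ((β : ℚ) : ℚ_[p])‖ := by
        have heq2 : (α : ℚ_[p]) - ((β : ℚ) : ℚ_[p])
            = ((α : ℚ_[p]) - ξ) + (ξ - ((β : ℚ) : ℚ_[p])) := by ring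
        rw [heq2]
        exact Padic.nonarchimedean _ _
      have hfinal : ‖(α : ℚ_[p]) - ((β : ℚ) : ℚ_[p])‖ ≤ ‖ξ - (α : ℚ_[p])‖ := by
        rcases max_cases ‖(α : ℚ_[p]) - ξ‖ ‖ξ - ((β : ℚ) : ℚ_[p])‖ with ⟨hmax, _⟩ | ⟨hmax, _⟩
        · rw [hmax] at hultra
          rw [norm_sub_rev ξ]
          exact hultra
        · rw [hmax] at hultra
          linarith
      have hchain1 : ((2 * H * ratHeight β : ℕ) : ℝ)⁻¹ ≤ (H:ℝ) ^ (-(w+1)) :=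
        le_trans (le_trans hliou hfinal) hαle
      have hrw : (H:ℝ) ^ (-(w+1)) = ((H:ℝ) ^ (w+1))⁻¹ := Real.rpow_neg (le_of_lt hHR0) _
      have hrpos : (0:ℝ) < (H:ℝ) ^ (w+1) := Real.rpow_pos_of_pos hHR0 _
      have hHw : (H:ℝ) ^ (w+1) ≤ ((2 * H * ratHeight β : ℕ) : ℝ) := by
        rw [hrw] at hchain1
        exact (inv_le_inv₀ hpos2 hrpos).mp hchain1
      have hXnat : 2 * H * ratHeight β ≤ 2 * C₁ * H ^ (κ + 1) := by
        have h1 : ratHeight β ≤ C₁ * H ^ κ := by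
          calc ratHeight β ≤ p ^ (j + 1) := hHβ
            _ ≤ p ^ (κ * n + 1) := Nat.pow_le_pow_right (by omega) (by omega)
            _ = p * (p ^ n) ^ κ := by rw [← pow_mul]; ring
            _ ≤ p * (p ^ (n₀ + 4) * H) ^ κ := by
                apply Nat.mul_le_mul_left
                apply Nat.pow_le_pow_left
                calc p ^ n = p ^ (n₀ + 4) * p ^ L := by rw [← pow_add]; congr 1; omega
                  _ ≤ p ^ (n₀ + 4) * H := Nat.mul_le_mul_left _ hpL
            _ = C₁ * H ^ κ := by
                have h2 : p * (p ^ (n₀+4) * H) ^ κ = p ^ (κ*(n₀+4)+1) * H ^ κ := by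
                  rw [mul_pow, ← pow_mul]; ring
                rw [h2, hC₁]
        calc 2 * H * ratHeight β ≤ 2 * H * (C₁ * H ^ κ) := Nat.mul_le_mul_left _ h1
          _ = 2 * C₁ * H ^ (κ + 1) := by ring
      have hXlt : 2 * C₁ * H ^ (κ + 1) < H ^ (κ + 2) := by
        have hHpow : 0 < H ^ (κ + 1) := by positivity
        calc 2 * C₁ * H ^ (κ + 1) < H * H ^ (κ + 1) := (Nat.mul_lt_mul_right hHpow).mpr h2C
          _ = H ^ (κ + 2) := by ring
      have hcast3 : (H:ℝ) ^ ((κ:ℝ) + 2) = ((H ^ (κ + 2) : ℕ) : ℝ) := by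
        rw [show ((κ:ℝ) + 2) = ((κ + 2 : ℕ) : ℝ) by push_cast; ring, Real.rpow_natCast]
        push_cast
        ring
      have hfinn : ((H ^ (κ + 2) : ℕ) : ℝ) ≤ (H:ℝ) ^ (w + 1) := by
        rw [← hcast3]
        exact Real.rpow_le_rpow_of_exponent_le hHR1 (by linarith)
      have c1 : ((2 * H * ratHeight β : ℕ) : ℝ) ≤ ((2 * C₁ * H ^ (κ+1) : ℕ) : ℝ) := by
        exact_mod_cast hXnat
      have c2 : ((2 * C₁ * H ^ (κ+1) : ℕ) : ℝ) < ((H ^ (κ+2) : ℕ) : ℝ) := by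
        exact_mod_cast hXlt
      linarith
  have hdio := dioCond_of_reps ρ hrep
  exact absurd (le_csSup hfin hdio) (not_le.mpr hρD)
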